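/- arXiv:1903.08266 — 2 statements merged into one kernel-verified Lean document; each statement's English description precedes it below -/
import Mathlib

section
/- Let p be a prime, s ≥ 2 an integer, m = p^s and k = p^{s−1} + 1. Then there exist constants C > 0 and c with 0 < c ≤ m/2 such that for all n ≥ 1: r_k(ℤ_m^n) ≥ C · (m − p + 1)^n / n^c. -/
/-- `S ⊆ (ℤ/mℤ)^n` contains no proper `k`-term arithmetic progression. -/
def ProgFree (m k : ℕ) {n : ℕ} (S : Finset (Fin n → ZMod m)) : Prop :=
  ¬ ∃ x d : Fin n → ZMod m,
      (Function.Injective fun i : Fin k => x + (i : ℕ) • d) ∧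
      ∀ i : Fin k, x + (i : ℕ) • d ∈ S

/-- Maximal size of a subset of `(ℤ/mℤ)^n` without a proper `k`-term AP. -/
noncomputable def rAP (k m n : ℕ) : ℕ :=
  sSup {c : ℕ | ∃ S : Finset (Fin n → ZMod m), ProgFree m k S ∧ S.card = c}

open Finset

section Aux
variable {p s : ℕ}

private lemma hm4 (hp : p.Prime) (hs : 2 ≤ s) : 4 ≤ p ^ s :=
  calc (4:ℕ) = 2 ^ 2 := rfl
  _ ≤ p ^ 2 := Nat.pow_le_pow_left hp.two_le 2
  _ ≤ p ^ s := Nat.pow_le_pow_right hp.pos hs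

private lemma hPm (hp : p.Prime) (hs : 2 ≤ s) : p ^ (s-1) * p = p ^ s := by
  rw [← pow_succ]; congr 1; omega

private lemma hPltm (hp : p.Prime) (hs : 2 ≤ s) : p ^ (s-1) < p ^ s :=
  Nat.pow_lt_pow_right hp.one_lt (by omega)

private lemma hP2 (hp : p.Prime) (hs : 2 ≤ s) : 2 ≤ p ^ (s-1) :=
  le_trans hp.two_le (Nat.le_self_pow (by omega) p)

private lemma nonunit_p_dvd (hp : p.Prime) (hs : 2 ≤ s) {a : ZMod (p ^ s)}
    (h : ¬ IsUnit a) : p ∣ a.val := by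
  haveI : NeZero (p ^ s) := ⟨(pow_pos hp.pos s).ne'⟩
  by_contra hnd
  apply h
  have hc : Nat.Coprime a.val (p ^ s) :=
    Nat.Coprime.pow_right s ((hp.coprime_iff_not_dvd.mpr hnd).symm)
  have := (ZMod.isUnit_iff_coprime a.val (p ^ s)).mpr hc
  rwa [ZMod.natCast_rightInverse a] at this

private lemma unit_not_dvd (hp : p.Prime) (hs : 2 ≤ s) {a : ZMod (p ^ s)}
    (h : IsUnit a) : ¬ p ∣ a.val := by
  haveI : NeZero (p ^ s) := ⟨(pow_pos hp.pos s).ne'⟩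
  intro hdvd
  rw [← ZMod.natCast_rightInverse a, ZMod.isUnit_iff_coprime] at h
  have : p ∣ Nat.gcd a.val (p ^ s) := Nat.dvd_gcd hdvd (dvd_pow_self p (by omega))
  rw [Nat.Coprime] at h
  rw [h] at this
  exact hp.one_lt.ne' (Nat.dvd_one.mp this)

private lemma nonunit_P_smul (hp : p.Prime) (hs : 2 ≤ s) {a : ZMod (p ^ s)}
    (h : ¬ IsUnit a) : p ^ (s-1) • a = 0 := by
  haveI : NeZero (p ^ s) := ⟨(pow_pos hp.pos s).ne'⟩
  obtain ⟨c, hc⟩ := nonunit_p_dvd hp hs h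
  rw [nsmul_eq_mul, ← ZMod.natCast_rightInverse a, ← Nat.cast_mul,
    ZMod.natCast_eq_zero_iff, hc, ← mul_assoc, hPm hp hs]
  exact Dvd.intro c rfl

private lemma unit_P_smul_ne (hp : p.Prime) (hs : 2 ≤ s) {d : ZMod (p ^ s)}
    (h : IsUnit d) : p ^ (s-1) • d ≠ 0 := by
  haveI : NeZero (p ^ s) := ⟨(pow_pos hp.pos s).ne'⟩
  rw [nsmul_eq_mul, ← ZMod.natCast_rightInverse d, ← Nat.cast_mul,
    Ne, ZMod.natCast_eq_zero_iff]
  intro hdvd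
  have h2 : p ^ (s-1) * p ∣ p ^ (s-1) * d.val := by rw [hPm hp hs]; exact hdvd
  exact unit_not_dvd hp hs h ((Nat.mul_dvd_mul_iff_left (pow_pos hp.pos (s-1))).mp h2)

private lemma P_dvd_iff (hp : p.Prime) (hs : 2 ≤ s) (z : ZMod (p ^ s)) :
    p ^ (s-1) ∣ z.val ↔
      (ZMod.castHom ⟨p, (hPm hp hs).symm⟩ (ZMod (p ^ (s-1)))) z = 0 := by
  haveI : NeZero (p ^ s) := ⟨(pow_pos hp.pos s).ne'⟩
  haveI : NeZero (p ^ (s-1)) := ⟨(pow_pos hp.pos _).ne'⟩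
  conv_rhs => rw [← ZMod.natCast_rightInverse z]
  rw [map_natCast, ZMod.natCast_eq_zero_iff]

private lemma smul_cast (hp : p.Prime) (hs : 2 ≤ s) (c : ℕ) (d : ZMod (p ^ s)) :
    c • d = ((c * d.val : ℕ) : ZMod (p ^ s)) := by
  haveI : NeZero (p ^ s) := ⟨(pow_pos hp.pos s).ne'⟩
  rw [nsmul_eq_mul, Nat.cast_mul, ZMod.natCast_rightInverse d]

private lemma P_smul_dvd (hp : p.Prime) (hs : 2 ≤ s) (d : ZMod (p ^ s)) :
    p ^ (s-1) ∣ (p ^ (s-1) • d).val := by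
  haveI : NeZero (p ^ s) := ⟨(pow_pos hp.pos s).ne'⟩
  rw [smul_cast hp hs, ZMod.val_natCast]
  exact (Nat.dvd_mod_iff ⟨p, (hPm hp hs).symm⟩).mpr ⟨d.val, rfl⟩

private lemma col_unit_start_ne (hp : p.Prime) (hs : 2 ≤ s) {a d : ZMod (p ^ s)}
    (hd : IsUnit d)
    (hcol : ∀ i : ℕ, i ≤ p^(s-1) → (p^(s-1) ∣ (a + i • d).val → a + i • d = 0)) :
    a ≠ 0 := by
  intro h
  subst h
  have h1 := hcol (p^(s-1)) le_rfl
  rw [zero_add] at h1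
  exact unit_P_smul_ne hp hs hd (h1 (P_smul_dvd hp hs d))

private lemma col_unit_end_ne (hp : p.Prime) (hs : 2 ≤ s) {a d : ZMod (p ^ s)}
    (hd : IsUnit d)
    (hcol : ∀ i : ℕ, i ≤ p^(s-1) → (p^(s-1) ∣ (a + i • d).val → a + i • d = 0)) :
    a + p^(s-1) • d ≠ 0 := by
  haveI : NeZero (p ^ s) := ⟨(pow_pos hp.pos s).ne'⟩
  haveI : NeZero (p ^ (s-1)) := ⟨(pow_pos hp.pos _).ne'⟩
  intro h
  set φ := ZMod.castHom ⟨p, (hPm hp hs).symm⟩ (ZMod (p ^ (s-1))) with hφ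
  have hPd : φ (p^(s-1) • d) = 0 := by
    rw [map_nsmul, nsmul_eq_mul, ZMod.natCast_self, zero_mul]
  have hφa : φ a = 0 := by
    have := congrArg φ h
    rw [map_add, hPd, add_zero, map_zero] at this
    exact this
  have ha0 : a = 0 := by
    have := hcol 0 (Nat.zero_le _)
    rw [zero_smul, add_zero] at this
    exact this ((P_dvd_iff hp hs a).mpr hφa)
  rw [ha0, zero_add] at h
  exact unit_P_smul_ne hp hs hd h

private lemma col_unit_interior (hp : p.Prime) (hs : 2 ≤ s) {a d : ZMod (p ^ s)}
    (hd : IsUnit d)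
    (hcol : ∀ i : ℕ, i ≤ p^(s-1) → (p^(s-1) ∣ (a + i • d).val → a + i • d = 0)) :
    ∃ i : ℕ, 0 < i ∧ i < p^(s-1) ∧ a + i • d = 0 := by
  haveI : NeZero (p ^ s) := ⟨(pow_pos hp.pos s).ne'⟩
  haveI : NeZero (p ^ (s-1)) := ⟨(pow_pos hp.pos _).ne'⟩
  set φ := ZMod.castHom ⟨p, (hPm hp hs).symm⟩ (ZMod (p ^ (s-1))) with hφ
  have hu : IsUnit (φ d) := hd.map φ
  set ib : ZMod (p^(s-1)) := -(φ a) * ↑hu.unit⁻¹ with hib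
  set i := ib.val with hi
  have hiP : i < p^(s-1) := ZMod.val_lt ib
  have hcast : ((i:ℕ) : ZMod (p^(s-1))) = ib := ZMod.natCast_rightInverse ib
  have hspec : (hu.unit : ZMod (p^(s-1))) = φ d := hu.unit_spec
  have hz : φ (a + i • d) = 0 := by
    rw [map_add, map_nsmul, nsmul_eq_mul, hcast, hib]
    calc φ a + -(φ a) * ↑hu.unit⁻¹ * φ d
        = φ a + -(φ a) * (↑hu.unit⁻¹ * ↑hu.unit) := by rw [hspec]; ring
      _ = 0 := by rw [Units.inv_mul]; ring
  have hz' : a + i • d = 0 := hcol i hiP.le ((P_dvd_iff hp hs _).mpr hz)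
  refine ⟨i, ?_, hiP, hz'⟩
  rcases Nat.eq_zero_or_pos i with h0 | h0
  · exfalso
    rw [h0, zero_smul, add_zero] at hz'
    exact col_unit_start_ne hp hs hd hcol hz'
  · exact h0

private lemma exists_mu (hp : p.Prime) (hs : 2 ≤ s) {v : ℕ} (hv0 : v ≠ 0)
    (hvlt : v < p ^ s) (hpv : p ∣ v) :
    ∃ μ e : ℕ, 0 < e ∧ e ≤ p ^ (s-1) ∧ p ^ s ∣ e * v ∧
      μ * v ≡ p ^ (s-1) [MOD p ^ s] := by
  haveI := Fact.mk hp
  have hw1 : 0 < v.factorization p := hp.factorization_pos_of_dvd hv0 hpv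
  have hws : v.factorization p ≤ s - 1 := by
    by_contra hcon
    have hsw : s ≤ v.factorization p := by omega
    have h2 : p ^ s ∣ v := dvd_trans (pow_dvd_pow p hsw) (Nat.ordProj_dvd v p)
    have := Nat.le_of_dvd (Nat.pos_of_ne_zero hv0) h2
    omega
  obtain ⟨w, u', hvu, hws, hw1, hpu'⟩ : ∃ w u' : ℕ, p ^ w * u' = v ∧ w ≤ s - 1 ∧
      0 < w ∧ ¬ p ∣ u' :=
    ⟨v.factorization p, v / p ^ v.factorization p,
      Nat.ordProj_mul_ordCompl_eq_self v p, hws, hw1, Nat.not_dvd_ordCompl hp hv0⟩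
  clear hv0 hpv
  have hne : (u' : ZMod p) ≠ 0 := by
    rw [Ne, ZMod.natCast_eq_zero_iff]; exact hpu'
  set u'' := ((u' : ZMod p)⁻¹).val with hu''
  have h1 : u'' * u' ≡ 1 [MOD p] := by
    have : ((u'' * u' : ℕ) : ZMod p) = ((1:ℕ) : ZMod p) := by
      push_cast
      rw [hu'', ZMod.natCast_rightInverse, inv_mul_cancel₀ hne]
    exact (ZMod.natCast_eq_natCast_iff _ _ _).mp this
  refine ⟨p ^ (s-1-w) * u'', p ^ (s-w), pow_pos hp.pos _,
    Nat.pow_le_pow_right hp.pos (by omega), ?_, ?_⟩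
  · rw [← hvu, ← mul_assoc, ← pow_add]
    have hsww : s - w + w = s := by omega
    rw [hsww]
    exact Dvd.intro u' rfl
  · have hkey : p ^ (s-1-w) * u'' * v = p ^ (s-1) * (u'' * u') := by
      rw [← hvu]
      calc p ^ (s-1-w) * u'' * (p ^ w * u')
          = p ^ (s-1-w) * p ^ w * (u'' * u') := by ring
        _ = p ^ (s-1) * (u'' * u') := by rw [← pow_add, Nat.sub_add_cancel hws]
    rw [hkey, ← hPm hp hs]
    calc p ^ (s-1) * (u'' * u') ≡ p ^ (s-1) * 1 [MOD p ^ (s-1) * p] :=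
          h1.mul_left' (p ^ (s-1))
      _ = p ^ (s-1) := by ring

private lemma col_nonunit_nozero (hp : p.Prime) (hs : 2 ≤ s) {a d : ZMod (p ^ s)}
    (hd : ¬ IsUnit d) (hdne : d ≠ 0)
    (hcol : ∀ i : ℕ, i ≤ p^(s-1) → (p^(s-1) ∣ (a + i • d).val → a + i • d = 0)) :
    ∀ i : ℕ, i ≤ p^(s-1) → a + i • d ≠ 0 := by
  haveI : NeZero (p ^ s) := ⟨(pow_pos hp.pos s).ne'⟩
  intro i₁ hi₁ hz
  have hv0 : d.val ≠ 0 := by rw [Ne, ZMod.val_eq_zero]; exact hdne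
  obtain ⟨μ, e, he0, heP, hed, hμv⟩ :=
    exists_mu hp hs hv0 (ZMod.val_lt d) (nonunit_p_dvd hp hs hd)
  have hedz : e • d = 0 := by
    rw [smul_cast hp hs, ZMod.natCast_eq_zero_iff]; exact hed
  have hμd : μ • d = ((p^(s-1) : ℕ) : ZMod (p ^ s)) := by
    rw [smul_cast hp hs]
    exact (ZMod.natCast_eq_natCast_iff _ _ _).mpr hμv
  set i := (i₁ + μ) % e with hidef
  have hiP : i ≤ p ^ (s-1) := le_trans (Nat.mod_lt _ he0).le heP
  have hieq : (i₁ + μ) • d = i • d := by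
    conv_lhs => rw [← Nat.div_add_mod (i₁ + μ) e]
    rw [add_smul, mul_comm, mul_smul, hedz, smul_zero, zero_add]
  have hval : a + i • d = ((p^(s-1) : ℕ) : ZMod (p ^ s)) := by
    rw [← hieq, add_smul, ← add_assoc, hz, zero_add, hμd]
  have hmem := hcol i hiP
  rw [hval] at hmem
  have hPv : (p^(s-1):ℕ) ∣ (((p^(s-1) : ℕ) : ZMod (p ^ s))).val := by
    rw [ZMod.val_natCast, Nat.mod_eq_of_lt (hPltm hp hs)]
  have h3 := hmem hPv
  rw [ZMod.natCast_eq_zero_iff] at h3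
  have := Nat.le_of_dvd (pow_pos hp.pos _) h3
  exact absurd this (by have := hPltm hp hs; omega)

private def Aset (p s : ℕ) [NeZero (p ^ s)] : Finset (ZMod (p ^ s)) :=
  univ.filter (fun a => p ^ (s-1) ∣ a.val → a = 0)

private lemma card_Aset (hp : p.Prime) (hs : 2 ≤ s) [NeZero (p ^ s)] :
    (Aset p s).card = p ^ s - p + 1 := by
  have hP0 : 0 < p ^ (s-1) := pow_pos hp.pos _
  have h1 : (Aset p s).card
      + (univ.filter (fun a : ZMod (p ^ s) => ¬(p ^ (s-1) ∣ a.val → a = 0))).card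
      = p ^ s := by
    rw [Aset, Finset.card_filter_add_card_filter_not, Finset.card_univ,
      ZMod.card]
  have h2 : (univ.filter (fun a : ZMod (p ^ s) => ¬(p ^ (s-1) ∣ a.val → a = 0))).card
      = (Finset.Ioo 0 p).card := by
    apply Finset.card_bij' (i := fun (a : ZMod (p ^ s)) _ => a.val / p ^ (s-1))
      (j := fun (r : ℕ) _ => ((r * p ^ (s-1) : ℕ) : ZMod (p ^ s)))
    · intro a ha
      rw [Finset.mem_filter, Classical.not_imp] at ha
      obtain ⟨-, hdvd, hne⟩ := ha
      have hv0 : a.val ≠ 0 := by rwa [Ne, ZMod.val_eq_zero]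
      rw [Finset.mem_Ioo]
      constructor
      · exact Nat.div_pos (Nat.le_of_dvd (Nat.pos_of_ne_zero hv0) hdvd) hP0
      · rw [Nat.div_lt_iff_lt_mul hP0]
        calc a.val < p ^ s := ZMod.val_lt a
          _ = p * p ^ (s-1) := by rw [← hPm hp hs]; ring
    · intro r hr
      rw [Finset.mem_Ioo] at hr
      have hlt : r * p ^ (s-1) < p ^ s := by
        calc r * p ^ (s-1) < p * p ^ (s-1) := (Nat.mul_lt_mul_right hP0).mpr hr.2
          _ = p ^ s := by rw [← hPm hp hs]; ring
      have hval : (((r * p ^ (s-1) : ℕ) : ZMod (p ^ s))).val = r * p ^ (s-1) := by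
        rw [ZMod.val_natCast, Nat.mod_eq_of_lt hlt]
      rw [Finset.mem_filter, Classical.not_imp]
      refine ⟨Finset.mem_univ _, ?_, ?_⟩
      · rw [hval]; exact Dvd.intro r (mul_comm _ _)
      · intro h0
        rw [← ZMod.val_eq_zero, hval] at h0
        rcases Nat.mul_eq_zero.mp h0 with h | h <;> omega
    · intro a ha
      rw [Finset.mem_filter, Classical.not_imp] at ha
      obtain ⟨-, hdvd, hne⟩ := ha
      rw [Nat.div_mul_cancel hdvd, ZMod.natCast_rightInverse]
    · intro r hr
      rw [Finset.mem_Ioo] at hr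
      have hlt : r * p ^ (s-1) < p ^ s := by
        calc r * p ^ (s-1) < p * p ^ (s-1) := (Nat.mul_lt_mul_right hP0).mpr hr.2
          _ = p ^ s := by rw [← hPm hp hs]; ring
      rw [ZMod.val_natCast, Nat.mod_eq_of_lt hlt, Nat.mul_div_cancel _ hP0]
  rw [h2] at h1
  simp only [Nat.card_Ioo, Nat.sub_zero] at h1
  have hple : p ≤ p ^ s := Nat.le_self_pow (by omega) p
  have hp2 := hp.two_le
  omega

private def cnt0 {m n : ℕ} [NeZero m] (x : Fin n → ZMod m) : ℕ :=
  (univ.filter fun j => x j = 0).card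

private def Sset (p s n t : ℕ) [NeZero (p ^ s)] : Finset (Fin n → ZMod (p ^ s)) :=
  (Fintype.piFinset fun _ : Fin n => Aset p s).filter fun x => cnt0 x = t

private lemma progfree (hp : p.Prime) (hs : 2 ≤ s) (n t : ℕ) [NeZero (p ^ s)] :
    ProgFree (p ^ s) (p ^ (s-1) + 1) (Sset p s n t) := by
  rintro ⟨x, d, hinj, hmem⟩
  have hP2' := hP2 hp hs
  set P := p ^ (s-1) with hPdef
  have hmem' : ∀ i : ℕ, i ≤ P →
      (∀ j, (P ∣ (x j + i • d j).val → x j + i • d j = 0)) ∧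
      (univ.filter fun j => x j + i • d j = 0).card = t := by
    intro i hi
    have h := hmem ⟨i, by omega⟩
    rw [Sset, Finset.mem_filter, Fintype.mem_piFinset] at h
    simp only [Sset, Finset.mem_filter, Fintype.mem_piFinset, Aset, cnt0,
      Finset.mem_univ, true_and, Pi.add_apply, Pi.smul_apply] at h
    exact h
  have hcolj : ∀ j, ∀ i : ℕ, i ≤ P →
      (P ∣ (x j + i • d j).val → x j + i • d j = 0) :=
    fun j i hi => (hmem' i hi).1 j
  obtain ⟨j0, hj0⟩ : ∃ j, IsUnit (d j) := by
    by_contra hcon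
    push_neg at hcon
    have hPd : (P : ℕ) • d = 0 := funext fun j => nonunit_P_smul hp hs (hcon j)
    have h0 : (⟨P, by omega⟩ : Fin (P+1)) = ⟨0, by omega⟩ := hinj (by
      show x + (P : ℕ) • d = x + (0 : ℕ) • d
      rw [hPd, zero_smul])
    have := congrArg Fin.val h0
    simp only [] at this
    omega
  set c : Fin n → ℕ → ℕ := fun j i => if x j + i • d j = 0 then 1 else 0 with hc
  have hrow : ∀ i : ℕ, i ≤ P → ∑ j, c j i = t := by
    intro i hi
    have h2 := (hmem' i hi).2
    rw [Finset.card_filter] at h2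
    exact h2
  have hnonneg : ∀ j (i : ℕ), 0 ≤ c j i := fun _ _ => Nat.zero_le _
  have hle : ∀ j ∈ (univ : Finset (Fin n)),
      (P-1) * (c j 0 + c j P) ≤ 2 * ∑ i ∈ Ioo 0 P, c j i := by
    intro j _
    by_cases hu : IsUnit (d j)
    · have ha := col_unit_start_ne hp hs hu (hcolj j)
      have hb := col_unit_end_ne hp hs hu (hcolj j)
      have hc0 : c j 0 = 0 := by
        simp only [hc]
        rw [if_neg]
        simpa using ha
      have hcP : c j P = 0 := by
        simp only [hc]
        rw [if_neg]
        exact hb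
      rw [hc0, hcP]
      simp
    · by_cases hd0 : d j = 0
      · have hconst : ∀ i : ℕ, c j i = c j 0 := by
          intro i; simp [hc, hd0]
        have hsum : ∑ i ∈ Ioo 0 P, c j i = (P-1) * c j 0 := by
          rw [Finset.sum_congr rfl (fun i _ => hconst i), Finset.sum_const,
            Nat.card_Ioo, smul_eq_mul]
          simp
        rw [hsum, hconst P]
        exact le_of_eq (by ring)
      · have hnone := col_nonunit_nozero hp hs hu hd0 (hcolj j)
        have hc0 : c j 0 = 0 := by
          simp only [hc]
          rw [if_neg]
          exact hnone 0 (Nat.zero_le _)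
        have hcP : c j P = 0 := by
          simp only [hc]
          rw [if_neg]
          exact hnone P le_rfl
        rw [hc0, hcP]
        simp
  have hstrict : (P-1) * (c j0 0 + c j0 P) < 2 * ∑ i ∈ Ioo 0 P, c j0 i := by
    have ha := col_unit_start_ne hp hs hj0 (hcolj j0)
    have hb := col_unit_end_ne hp hs hj0 (hcolj j0)
    have hc0 : c j0 0 = 0 := by
      simp only [hc]; rw [if_neg]; simpa using ha
    have hcP : c j0 P = 0 := by
      simp only [hc]; rw [if_neg]; exact hb
    obtain ⟨i, hi0, hiP, hz⟩ := col_unit_interior hp hs hj0 (hcolj j0)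
    have h1 : 1 ≤ ∑ i ∈ Ioo 0 P, c j0 i := by
      have hci : c j0 i = 1 := by simp only [hc]; rw [if_pos hz]
      calc 1 = c j0 i := hci.symm
        _ ≤ ∑ i ∈ Ioo 0 P, c j0 i :=
          Finset.single_le_sum (fun _ _ => Nat.zero_le _)
            (Finset.mem_Ioo.mpr ⟨hi0, hiP⟩)
    rw [hc0, hcP]
    omega
  have hlt := Finset.sum_lt_sum hle ⟨j0, Finset.mem_univ _, hstrict⟩
  have hL : ∑ j, (P-1) * (c j 0 + c j P) = (P-1) * (t + t) := by
    rw [← Finset.mul_sum, Finset.sum_add_distrib, hrow 0 (Nat.zero_le _),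
      hrow P le_rfl]
  have hR : ∑ j, 2 * ∑ i ∈ Ioo 0 P, c j i = 2 * ((P-1) * t) := by
    rw [← Finset.mul_sum, Finset.sum_comm]
    congr 1
    rw [Finset.sum_congr rfl (fun i hi => hrow i (le_of_lt (Finset.mem_Ioo.mp hi).2)),
      Finset.sum_const, Nat.card_Ioo, smul_eq_mul]
    simp
  rw [hL, hR] at hlt
  have heq : (P-1) * (t + t) = 2 * ((P-1) * t) := by ring
  omega

private lemma main_bound (hp : p.Prime) (hs : 2 ≤ s) (n : ℕ) :
    (p ^ s - p + 1) ^ n ≤ (n + 1) * rAP (p ^ (s-1) + 1) (p ^ s) n := by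
  haveI : NeZero (p ^ s) := ⟨(pow_pos hp.pos s).ne'⟩
  have hbdd : BddAbove {c : ℕ | ∃ S : Finset (Fin n → ZMod (p ^ s)),
      ProgFree (p ^ s) (p ^ (s-1) + 1) S ∧ S.card = c} := by
    refine ⟨Fintype.card (Fin n → ZMod (p ^ s)), ?_⟩
    rintro c ⟨S, -, rfl⟩
    exact Finset.card_le_univ S
  have hS : ∀ t, (Sset p s n t).card ≤ rAP (p ^ (s-1) + 1) (p ^ s) n :=
    fun t => le_csSup hbdd ⟨Sset p s n t, progfree hp hs n t, rfl⟩
  have hTcard : (Fintype.piFinset fun _ : Fin n => Aset p s).card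
      = (p ^ s - p + 1) ^ n := by
    rw [Fintype.card_piFinset]
    simp [card_Aset hp hs]
  have hfib : (Fintype.piFinset fun _ : Fin n => Aset p s).card
      = ∑ t ∈ Finset.range (n+1), (Sset p s n t).card := by
    simp only [Sset]
    apply Finset.card_eq_sum_card_fiberwise
    intro x _
    rw [Finset.mem_coe, Finset.mem_range]
    have h1 : cnt0 x ≤ n := by
      have := Finset.card_filter_le (univ : Finset (Fin n)) (fun j => x j = 0)
      simpa [cnt0] using this
    omega
  calc (p ^ s - p + 1) ^ n
      = ∑ t ∈ Finset.range (n+1), (Sset p s n t).card := by rw [← hfib, hTcard]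
    _ ≤ ∑ _t ∈ Finset.range (n+1), rAP (p ^ (s-1) + 1) (p ^ s) n :=
        Finset.sum_le_sum (fun t _ => hS t)
    _ = (n + 1) * rAP (p ^ (s-1) + 1) (p ^ s) n := by
        rw [Finset.sum_const, Finset.card_range, smul_eq_mul]

end Aux

theorem stmt11 (p s m k : ℕ) (hp : p.Prime) (hs : 2 ≤ s)
    (hm : m = p ^ s) (hk : k = p ^ (s - 1) + 1) :
    ∃ C c : ℝ, 0 < C ∧ 0 < c ∧ c ≤ (m : ℝ) / 2 ∧ ∀ n : ℕ, 1 ≤ n →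
      C * ((m : ℝ) - (p : ℝ) + 1) ^ n / (n : ℝ) ^ c ≤ (rAP k m n : ℝ) := by
  subst hm hk
  have h4 : 4 ≤ p ^ s := hm4 hp hs
  have hple : p ≤ p ^ s := Nat.le_self_pow (by omega) p
  refine ⟨1/2, 1, by norm_num, by norm_num, ?_, ?_⟩
  · have h4' : (4:ℝ) ≤ ((p ^ s : ℕ) : ℝ) := by exact_mod_cast h4
    rw [le_div_iff₀ (by norm_num : (0:ℝ) < 2)]
    push_cast at h4' ⊢
    linarith
  · intro n hn
    rw [Real.rpow_one]
    have hb := main_bound hp hs n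
    have hcast : ((p ^ s - p + 1 : ℕ) : ℝ) = ((p ^ s : ℕ) : ℝ) - (p : ℝ) + 1 := by
      rw [Nat.cast_add, Nat.cast_sub hple, Nat.cast_one]
    set R := (rAP (p ^ (s-1) + 1) (p ^ s) n : ℝ) with hR
    have hRn : (0:ℝ) ≤ R := Nat.cast_nonneg _
    have hXpos : (0:ℝ) ≤ ((p ^ s : ℕ) : ℝ) - (p : ℝ) + 1 := by
      rw [← hcast]; positivity
    have hreal : (((p ^ s : ℕ) : ℝ) - (p : ℝ) + 1) ^ n ≤ ((n : ℝ) + 1) * R := by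
      rw [← hcast, hR]
      exact_mod_cast hb
    have hn1 : (1:ℝ) ≤ (n : ℝ) := by exact_mod_cast hn
    have hn0 : (0:ℝ) < (n : ℝ) := by linarith
    rw [div_le_iff₀ hn0]
    push_cast
    push_cast at hreal hXpos
    nlinarith [pow_nonneg hXpos n, mul_nonneg hRn (sub_nonneg.mpr hn1)]
end

section
/- There exist constants C > 0 and c with 0 < c ≤ 125/2 such that for all n ≥ 1: r_6(ℤ_{125}^n) ≥ C · 85^n / n^c. -/
/-! Auxiliary data: an 85-element subset `D` of `ZMod 125` (given by the bitmask `dmask`)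
together with a weight function (3 bits per element, packed in `wmask`) such that the weight
sequence along any 6-term AP contained in `D` is convex, and is non-linear whenever the
common difference is not divisible by 25. -/

def dmask : ℕ := 40332410615907601345836693671935048661
def wmask : ℕ := 14715717233339968270471207170462515927170262278617622205144312626945574580202505495900422220571507080122627035721

def wN (v : ℕ) : ℕ := (wmask >>> (3 * v)) % 8

abbrev Pab (a b : ℕ) : Prop :=
  (∀ i, i < 6 → Nat.testBit dmask ((a + i * b) % 125) = true) →
  ((∀ i, i < 4 → 2 * wN ((a + (i+1) * b) % 125) ≤ wN ((a + i * b) % 125) + wN ((a + (i+2) * b) % 125)) ∧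
   ((∀ i, i < 4 → 2 * wN ((a + (i+1) * b) % 125) = wN ((a + i * b) % 125) + wN ((a + (i+2) * b) % 125)) →
      (5 * b) % 125 = 0))

set_option maxRecDepth 100000 in
set_option maxHeartbeats 8000000 in
theorem checkAll :
    ((List.range 125).all fun a => (List.range 125).all fun b => decide (Pab a b)) = true := by
  rfl

lemma Pab_all : ∀ a, a < 125 → ∀ b, b < 125 → Pab a b := by
  intro a ha b hb
  have h1 := List.all_eq_true.mp checkAll _ (List.mem_range.mpr ha)
  have h2 := List.all_eq_true.mp h1 _ (List.mem_range.mpr hb)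
  exact of_decide_eq_true h2

def wf (a : ZMod 125) : ℕ := wN a.val
def Dset : Finset (ZMod 125) := Finset.univ.filter (fun a => Nat.testBit dmask a.val)

lemma card_D : Dset.card = 85 := by decide

lemma val_aux (a b : ZMod 125) (i : ℕ) : (a + i • b).val = (a.val + i * b.val) % 125 := by
  rw [nsmul_eq_mul, ZMod.val_add, ZMod.val_mul, ZMod.val_natCast]
  exact Nat.ModEq.add_left a.val
    ((Nat.mod_modEq _ 125).trans (Nat.ModEq.mul_right b.val (Nat.mod_modEq i 125)))

lemma mem_Dset (a : ZMod 125) : a ∈ Dset ↔ Nat.testBit dmask a.val = true := by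
  simp [Dset]

lemma convexD : ∀ a b : ZMod 125, (∀ i : Fin 6, a + (i:ℕ) • b ∈ Dset) →
    ∀ i : Fin 4, 2 * wf (a + ((i:ℕ)+1) • b) ≤ wf (a + (i:ℕ) • b) + wf (a + ((i:ℕ)+2) • b) := by
  intro a b hmem i
  have hP := Pab_all a.val a.val_lt b.val b.val_lt
  have hm : ∀ j, j < 6 → Nat.testBit dmask ((a.val + j * b.val) % 125) = true := by
    intro j hj
    have := (mem_Dset _).mp (hmem ⟨j, hj⟩)
    rwa [val_aux] at this
  have := (hP hm).1 (i:ℕ) i.isLt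
  simpa only [wf, val_aux] using this

lemma nonlinD : ∀ a b : ZMod 125, (∀ i : Fin 6, a + (i:ℕ) • b ∈ Dset) →
    (∀ i : Fin 4, 2 * wf (a + ((i:ℕ)+1) • b) = wf (a + (i:ℕ) • b) + wf (a + ((i:ℕ)+2) • b)) →
    (5:ℕ) • b = 0 := by
  intro a b hmem hlin
  have hP := Pab_all a.val a.val_lt b.val b.val_lt
  have hm : ∀ j, j < 6 → Nat.testBit dmask ((a.val + j * b.val) % 125) = true := by
    intro j hj
    have := (mem_Dset _).mp (hmem ⟨j, hj⟩)
    rwa [val_aux] at this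
  have hl : ∀ j, j < 4 → 2 * wN ((a.val + (j+1) * b.val) % 125)
      = wN ((a.val + j * b.val) % 125) + wN ((a.val + (j+2) * b.val) % 125) := by
    intro j hj
    have := hlin ⟨j, hj⟩
    simpa only [wf, val_aux] using this
  have h5 : (5 * b.val) % 125 = 0 := (hP hm).2 hl
  have hv : ((5:ℕ) • b).val = 0 := by
    have := val_aux 0 b 5
    simpa [h5] using this
  exact (ZMod.val_eq_zero _).mp hv

noncomputable def Sfil (n t : ℕ) : Finset (Fin n → ZMod 125) :=
  (Fintype.piFinset (fun _ : Fin n => Dset)).filter (fun x => ∑ j, wf (x j) = t)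

lemma Sfil_progfree (n t : ℕ) : ProgFree 125 6 (Sfil n t) := by
  rintro ⟨x, d, hinj, hmem⟩
  have hD : ∀ (i : Fin 6) (j : Fin n), x j + (i:ℕ) • d j ∈ Dset := by
    intro i j
    have := hmem i
    rw [Sfil, Finset.mem_filter, Fintype.mem_piFinset] at this
    simpa using this.1 j
  have hsum : ∀ i : Fin 6, ∑ j, wf (x j + (i:ℕ) • d j) = t := by
    intro i
    have := hmem i
    rw [Sfil, Finset.mem_filter] at this
    simpa using this.2
  have hlin : ∀ (j : Fin n) (i : Fin 4),
      2 * wf (x j + ((i:ℕ)+1) • d j) = wf (x j + (i:ℕ) • d j) + wf (x j + ((i:ℕ)+2) • d j) := by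
    intro j i
    have hle : ∀ j : Fin n,
        2 * wf (x j + ((i:ℕ)+1) • d j) ≤ wf (x j + (i:ℕ) • d j) + wf (x j + ((i:ℕ)+2) • d j) := by
      intro j'
      exact convexD (x j') (d j') (fun i' => hD i' j') i
    have h0 : (∑ j, 2 * wf (x j + ((i:ℕ)+1) • d j))
        = ∑ j, (wf (x j + (i:ℕ) • d j) + wf (x j + ((i:ℕ)+2) • d j)) := by
      rw [Finset.sum_add_distrib, ← Finset.mul_sum]
      have e1 : ∀ (k : ℕ) (hk : k < 6), ∑ j, wf (x j + (k:ℕ) • d j) = t := by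
        intro k hk
        simpa using hsum ⟨k, hk⟩
      rw [e1 ((i:ℕ)+1) (by omega), e1 (i:ℕ) (by omega), e1 ((i:ℕ)+2) (by omega)]
      ring
    have hall := (Finset.sum_eq_sum_iff_of_le (fun j' _ => hle j')).mp h0
    exact (hall j (Finset.mem_univ j))
  have hdeg : ∀ j, (5:ℕ) • d j = 0 := by
    intro j
    exact nonlinD (x j) (d j) (fun i' => hD i' j) (fun i => (hlin j i))
  have h5 : (fun i : Fin 6 => x + (i:ℕ) • d) 0 = (fun i : Fin 6 => x + (i:ℕ) • d) 5 := by
    show x + ((0:ℕ)) • d = x + ((5:ℕ)) • d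
    funext j
    simp only [Pi.add_apply, Pi.smul_apply, zero_smul, Pi.zero_apply, add_zero, hdeg j]
  exact absurd (hinj h5) (by decide)

lemma rAP_ge (n t : ℕ) : (Sfil n t).card ≤ rAP 6 125 n := by
  apply le_csSup
  · refine ⟨(125:ℕ)^n, ?_⟩
    rintro c ⟨S, _, rfl⟩
    calc S.card ≤ Fintype.card (Fin n → ZMod 125) := Finset.card_le_univ S
    _ = 125^n := by simp [Fintype.card_fun, ZMod.card]
  · exact ⟨Sfil n t, Sfil_progfree n t, rfl⟩

lemma pigeon (n : ℕ) : ∃ t, 85^n ≤ (7*n+1) * (Sfil n t).card := by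
  classical
  have hsplit : (Fintype.piFinset (fun _ : Fin n => Dset)).card
      = ∑ t ∈ Finset.range (7*n+1), (Sfil n t).card := by
    apply Finset.card_eq_sum_card_fiberwise
    intro x hx
    rw [Finset.mem_coe, Finset.mem_range]
    have : ∑ j, wf (x j) ≤ ∑ _j : Fin n, 7 := by
      apply Finset.sum_le_sum
      intro j _
      exact Nat.le_of_lt_succ (Nat.mod_lt _ (by norm_num))
    simpa using Nat.lt_succ_of_le (this.trans (by simp [Finset.sum_const, Nat.mul_comm]))
  have hcardA : (Fintype.piFinset (fun _ : Fin n => Dset)).card = 85^n := by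
    rw [Fintype.card_piFinset]
    simp [card_D]
  obtain ⟨t, _, hmax⟩ := Finset.exists_max_image (Finset.range (7*n+1))
      (fun t => (Sfil n t).card) ⟨0, by simp⟩
  refine ⟨t, ?_⟩
  calc 85^n = ∑ u ∈ Finset.range (7*n+1), (Sfil n u).card := by rw [← hsplit, hcardA]
    _ ≤ ∑ _u ∈ Finset.range (7*n+1), (Sfil n t).card :=
        Finset.sum_le_sum (fun u hu => hmax u hu)
    _ = (7*n+1) * (Sfil n t).card := by simp [Finset.sum_const, Finset.card_range]

theorem stmt13 :
    ∃ C c : ℝ, 0 < C ∧ 0 < c ∧ c ≤ 125 / 2 ∧ ∀ n : ℕ, 1 ≤ n →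
      C * 85 ^ n / (n : ℝ) ^ c ≤ (rAP 6 125 n : ℝ) := by
  refine ⟨1/8, 1, by norm_num, by norm_num, by norm_num, ?_⟩
  intro n hn
  obtain ⟨t, hcard⟩ := pigeon n
  have h1 : (Sfil n t).card ≤ rAP 6 125 n := rAP_ge n t
  have hnR : (0:ℝ) < n := by exact_mod_cast Nat.lt_of_lt_of_le Nat.zero_lt_one hn
  have key : (85:ℝ)^n ≤ 8 * n * (rAP 6 125 n : ℝ) := by
    have h2 : (85:ℕ)^n ≤ (7*n+1) * rAP 6 125 n :=
      hcard.trans (Nat.mul_le_mul_left _ h1)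
    have h3 : (7*n+1) * rAP 6 125 n ≤ 8*n * rAP 6 125 n :=
      Nat.mul_le_mul_right _ (by omega)
    exact_mod_cast h2.trans h3
  rw [Real.rpow_one, div_le_iff₀ hnR]
  nlinarith [key]
end
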